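/- Let ν be a Borel measure on ℝ^d with ν({0}) = 0 satisfying ∫_{|x|≤2} |x|^2 ν(dx) + ∫_{|x|>2} (log|x|)^α ν(dx) < ∞, and define M_α as M_α(B) = ∫_{ℝ^d} ∫_0^1 1_B(yr) (-log r)^(α-1) r^(-1) dr ν(dy) for α > 0. Then for any p > 0, ∫_{|x|≤1} |x|^p M_α(dx) < ∞ if and only if ∫_{|x|≤1} |x|^p ν(dx) < ∞. -/

import Mathlib

open MeasureTheory Real
open scoped ENNReal

section stmt5aux
open Set intervalIntegral

private lemma stmt5_aux_exp_bound {β q : ℝ} (hβ : 0 ≤ β) (hq : 0 < q) :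
    ∃ c : ℝ, 0 ≤ c ∧ ∀ t : ℝ, 0 ≤ t → t ^ β ≤ 1 + c * Real.exp (q * t) := by
  set n : ℕ := ⌈β⌉₊ + 1 with hn
  have hβn : β ≤ (n : ℝ) := (Nat.le_ceil β).trans (by exact_mod_cast Nat.le_succ _)
  have hnpos : (0:ℝ) < n := by positivity
  refine ⟨((n : ℝ) / q) ^ n, by positivity, fun t ht => ?_⟩
  have hexp : (0:ℝ) ≤ Real.exp (q * t) := (Real.exp_pos _).le
  rcases le_total t 1 with h1 | h1
  · have : t ^ β ≤ 1 := Real.rpow_le_one ht h1 hβ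
    nlinarith [mul_nonneg (pow_nonneg (by positivity : (0:ℝ) ≤ (n:ℝ)/q) n) hexp]
  · have h2 : t ^ β ≤ t ^ (n : ℝ) := Real.rpow_le_rpow_of_exponent_le h1 hβn
    rw [Real.rpow_natCast] at h2
    have h3 : q * t / n ≤ Real.exp (q * t / n) := by
      have := Real.add_one_le_exp (q * t / n); linarith
    have h4 : (q * t / n) ^ n ≤ Real.exp (q * t / n) ^ n :=
      pow_le_pow_left₀ (by positivity) h3 n
    have h5 : Real.exp (q * t / n) ^ n = Real.exp (q * t) := by
      rw [← Real.exp_nat_mul]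
      congr 1
      field_simp
    have h6 : t ^ n = ((n : ℝ) / q) ^ n * (q * t / n) ^ n := by
      rw [← mul_pow]
      congr 1
      field_simp
    have : t ^ n ≤ ((n : ℝ) / q) ^ n * Real.exp (q * t) := by
      rw [h6, ← h5]
      exact mul_le_mul_of_nonneg_left h4 (by positivity)
    linarith

private lemma stmt5_lint_rpow {q b : ℝ} (hq : -1 < q) (hb : 0 < b) :
    ∫⁻ r in Ioo (0:ℝ) b, ENNReal.ofReal (r ^ q) = ENNReal.ofReal (b ^ (q+1) / (q+1)) := by
  have hint : IntegrableOn (fun r : ℝ => r ^ q) (Ioo 0 b) := (integrableOn_Ioo_rpow_iff hb).2 hq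
  rw [← ofReal_integral_eq_lintegral_ofReal hint
    ((ae_restrict_iff' measurableSet_Ioo).2 (ae_of_all _ fun x hx => Real.rpow_nonneg hx.1.le q))]
  congr 1
  rw [← integral_Ioc_eq_integral_Ioo, ← integral_of_le hb.le,
    integral_rpow (Or.inl hq), Real.zero_rpow (by linarith : q + 1 ≠ 0)]
  ring

private lemma stmt5_lint_K_rpow {q b K : ℝ} (hq : -1 < q) (hb : 0 < b) (hK : 0 ≤ K) :
    ∫⁻ r in Ioo (0:ℝ) b, ENNReal.ofReal (K * r ^ q) = ENNReal.ofReal (K * (b ^ (q+1) / (q+1))) := by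
  simp_rw [ENNReal.ofReal_mul hK]
  rw [lintegral_const_mul' _ _ ENNReal.ofReal_ne_top, stmt5_lint_rpow hq hb]

private lemma stmt5_lint_one_sub {α : ℝ} (hα : 0 < α) :
    ∫⁻ r in Ico (1/2:ℝ) 1, ENNReal.ofReal ((1 - r) ^ (α - 1)) < ∞ := by
  have h1 : IntervalIntegrable (fun x : ℝ => x ^ (α - 1)) volume 0 (1/2) :=
    intervalIntegrable_rpow' (by linarith)
  have h2 := h1.comp_sub_left 1
  rw [intervalIntegrable_iff] at h2
  have h3 : IntegrableOn (fun x : ℝ => (1 - x) ^ (α - 1)) (Ioo (1/2 : ℝ) 1) := by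
    refine (h2.mono_set ?_)
    rw [uIoc_comm, uIoc_of_le (by norm_num : (1:ℝ) - 1/2 ≤ 1 - 0)]
    norm_num
    exact Ioo_subset_Ioc_self
  have h4 : (∫⁻ r in Ico (1/2:ℝ) 1, ENNReal.ofReal ((1 - r) ^ (α - 1)))
      = ∫⁻ r in Ioo (1/2:ℝ) 1, ENNReal.ofReal ((1 - r) ^ (α - 1)) := by
    rw [Measure.restrict_congr_set Ioo_ae_eq_Ico.symm]
  rw [h4]
  calc ∫⁻ r in Ioo (1/2:ℝ) 1, ENNReal.ofReal ((1 - r) ^ (α - 1))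
      ≤ ∫⁻ r in Ioo (1/2:ℝ) 1, ‖(1 - r) ^ (α - 1)‖₊ := by
        refine lintegral_mono fun r => ?_
        exact ENNReal.ofReal_le_of_le_toReal (by simp [ENNReal.coe_toReal]; exact Real.le_norm_self _)
    _ < ∞ := h3.2

private lemma stmt5_C_lt_top {α p : ℝ} (hα : 0 < α) (hp : 0 < p) :
    ∫⁻ r in Ioo (0:ℝ) 1, ENNReal.ofReal (r ^ p * ((-Real.log r) ^ (α - 1) * r⁻¹)) < ∞ := by
  have hsplit : Ioo (0:ℝ) 1 = Ioo 0 (1/2) ∪ Ico (1/2) 1 :=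
    (Ioo_union_Ico_eq_Ioo (by norm_num) (by norm_num)).symm
  rw [hsplit]
  refine lt_of_le_of_lt (lintegral_union_le _ _ _) (ENNReal.add_lt_top.2 ⟨?_, ?_⟩)
  · -- piece on Ioo 0 (1/2)
    obtain ⟨c₀, c₁, hc₀, hc₁, hbd⟩ : ∃ c₀ c₁ : ℝ, 0 ≤ c₀ ∧ 0 ≤ c₁ ∧
        ∀ r ∈ Ioo (0:ℝ) (1/2), (-Real.log r) ^ (α - 1) ≤ c₀ + c₁ * r ^ (-(p/2)) := by
      rcases le_or_gt α 1 with hle | hgt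
      · refine ⟨(Real.log 2) ^ (α - 1), 0,
          Real.rpow_nonneg (Real.log_pos one_lt_two).le _, le_refl 0, fun r hr => ?_⟩
        have hlr : Real.log 2 ≤ -Real.log r := by
          have h1 : Real.log r ≤ Real.log (1/2) := Real.log_le_log hr.1 hr.2.le
          have h2 : Real.log (1/2 : ℝ) = -Real.log 2 := by
            rw [one_div, Real.log_inv]
          linarith
        have := Real.rpow_le_rpow_of_nonpos (Real.log_pos one_lt_two) hlr
          (by linarith : α - 1 ≤ 0)
        linarith
      · obtain ⟨c, hc, h⟩ := stmt5_aux_exp_bound (by linarith : (0:ℝ) ≤ α - 1) (half_pos hp)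
        refine ⟨1, c, zero_le_one, hc, fun r hr => ?_⟩
        have ht : 0 ≤ -Real.log r := by
          have := Real.log_nonpos hr.1.le (by linarith [hr.2] : r ≤ 1); linarith
        have h2 := h _ ht
        have h3 : Real.exp (p/2 * -Real.log r) = r ^ (-(p/2)) := by
          rw [Real.rpow_def_of_pos hr.1]; ring_nf
        rw [h3] at h2
        exact h2
    refine lt_of_le_of_lt (setLIntegral_mono'
      (g := fun r : ℝ => ENNReal.ofReal (c₀ * r ^ (p-1)) + ENNReal.ofReal (c₁ * r ^ (p/2-1)))
      measurableSet_Ioo (fun r hr => ?_)) ?_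
    · have hr0 : (0:ℝ) < r := hr.1
      have e1 : r ^ (p-1) = r ^ p * r⁻¹ := by
        rw [show p - 1 = p + (-1) by ring, Real.rpow_add hr0, Real.rpow_neg_one]
      have e2 : r ^ (p/2-1) = r ^ (-(p/2)) * (r ^ p * r⁻¹) := by
        rw [show p/2 - 1 = -(p/2) + (p + -1) by ring, Real.rpow_add hr0, Real.rpow_add hr0,
          Real.rpow_neg_one]
      have hT := hbd r hr
      have hnn : 0 ≤ r ^ p * r⁻¹ := by positivity
      calc ENNReal.ofReal (r ^ p * ((-Real.log r) ^ (α - 1) * r⁻¹))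
          = ENNReal.ofReal ((-Real.log r) ^ (α - 1) * (r ^ p * r⁻¹)) := by ring_nf
        _ ≤ ENNReal.ofReal ((c₀ + c₁ * r ^ (-(p/2))) * (r ^ p * r⁻¹)) :=
            ENNReal.ofReal_le_ofReal (mul_le_mul_of_nonneg_right hT hnn)
        _ = ENNReal.ofReal (c₀ * r ^ (p-1) + c₁ * r ^ (p/2-1)) := by rw [e1, e2]; ring_nf
        _ ≤ ENNReal.ofReal (c₀ * r ^ (p-1)) + ENNReal.ofReal (c₁ * r ^ (p/2-1)) :=
            ENNReal.ofReal_add_le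
    · rw [lintegral_add_left (by fun_prop)]
      rw [stmt5_lint_K_rpow (by linarith : (-1:ℝ) < p - 1) (by norm_num : (0:ℝ) < 1/2) hc₀,
        stmt5_lint_K_rpow (by linarith : (-1:ℝ) < p/2 - 1) (by norm_num : (0:ℝ) < 1/2) hc₁]
      exact ENNReal.add_lt_top.2 ⟨ENNReal.ofReal_lt_top, ENNReal.ofReal_lt_top⟩
  · -- piece on Ico (1/2) 1
    refine lt_of_le_of_lt (setLIntegral_mono'
      (g := fun r : ℝ => ENNReal.ofReal 2 + ENNReal.ofReal 2 * ENNReal.ofReal ((1-r) ^ (α-1)))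
      measurableSet_Ico (fun r hr => ?_)) ?_
    · have hr0 : (0:ℝ) < r := lt_of_lt_of_le (by norm_num) hr.1
      have hr1 : r < 1 := hr.2
      have hlognn : 0 ≤ -Real.log r := by
        have := Real.log_nonpos hr0.le hr1.le; linarith
      have h1snn : (0:ℝ) ≤ (1-r) ^ (α-1) := Real.rpow_nonneg (by linarith) _
      have hinv : r⁻¹ ≤ 2 := by
        rw [inv_eq_one_div, div_le_iff₀ hr0]; linarith [hr.1]
      have hrp : r ^ p ≤ 1 := Real.rpow_le_one hr0.le hr1.le hp.le
      have hT : (-Real.log r) ^ (α - 1) ≤ 1 + (1-r) ^ (α-1) := by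
        rcases le_or_gt 1 α with hge | hlt
        · have hlog2 : -Real.log r ≤ 1 := by
            have h1 : Real.log (1/2 : ℝ) ≤ Real.log r := Real.log_le_log (by norm_num) hr.1
            have h2 : Real.log (1/2 : ℝ) = -Real.log 2 := by rw [one_div, Real.log_inv]
            have := Real.log_two_lt_d9
            linarith
          have := Real.rpow_le_one hlognn hlog2 (by linarith : 0 ≤ α - 1)
          linarith
        · have h1r : (0:ℝ) < 1 - r := by linarith
          have hls : 1 - r ≤ -Real.log r := by
            have := Real.log_le_sub_one_of_pos hr0; linarith
          have := Real.rpow_le_rpow_of_nonpos h1r hls (by linarith : α - 1 ≤ 0)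
          linarith
      have s1 : (-Real.log r) ^ (α - 1) * r⁻¹ ≤ (1 + (1-r) ^ (α-1)) * 2 :=
        mul_le_mul hT hinv (inv_nonneg.2 hr0.le) (by linarith)
      have s2 : r ^ p * ((-Real.log r) ^ (α - 1) * r⁻¹) ≤ 1 * ((1 + (1-r) ^ (α-1)) * 2) :=
        mul_le_mul hrp s1 (mul_nonneg (Real.rpow_nonneg hlognn _) (inv_nonneg.2 hr0.le))
          zero_le_one
      calc ENNReal.ofReal (r ^ p * ((-Real.log r) ^ (α - 1) * r⁻¹))
          ≤ ENNReal.ofReal (2 + 2 * (1-r) ^ (α-1)) :=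
            ENNReal.ofReal_le_ofReal (by linarith)
        _ = ENNReal.ofReal 2 + ENNReal.ofReal 2 * ENNReal.ofReal ((1-r) ^ (α-1)) := by
            rw [ENNReal.ofReal_add (by norm_num) (by linarith), ENNReal.ofReal_mul (by norm_num)]
    · rw [lintegral_add_left measurable_const, lintegral_const_mul' _ _ ENNReal.ofReal_ne_top,
        setLIntegral_const]
      refine ENNReal.add_lt_top.2 ⟨?_, ?_⟩
      · exact ENNReal.mul_lt_top ENNReal.ofReal_lt_top (by simp [Real.volume_Ico])
      · exact ENNReal.mul_lt_top ENNReal.ofReal_lt_top (stmt5_lint_one_sub hα)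

private lemma stmt5_C_pos {α p : ℝ} (hα : 0 < α) (hp : 0 < p) :
    0 < ∫⁻ r in Ioo (0:ℝ) 1, ENNReal.ofReal (r ^ p * ((-Real.log r) ^ (α - 1) * r⁻¹)) := by
  have l2 : (0:ℝ) < Real.log 2 := Real.log_pos one_lt_two
  have l4 : (0:ℝ) < Real.log 4 := Real.log_pos (by norm_num)
  set m : ℝ := min ((Real.log 2) ^ (α - 1)) ((Real.log 4) ^ (α - 1)) with hm
  have hmpos : 0 < m :=
    lt_min (Real.rpow_pos_of_pos l2 _) (Real.rpow_pos_of_pos l4 _)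
  set ε : ℝ := (4:ℝ)⁻¹ ^ p * m with hε
  have hεpos : 0 < ε := mul_pos (Real.rpow_pos_of_pos (by norm_num) _) hmpos
  have hsub : Ioo (4⁻¹:ℝ) (2⁻¹) ⊆ Ioo (0:ℝ) 1 := Ioo_subset_Ioo (by norm_num) (by norm_num)
  have key : ENNReal.ofReal ε * volume (Ioo (4⁻¹:ℝ) (2⁻¹)) ≤
      ∫⁻ r in Ioo (4⁻¹:ℝ) (2⁻¹), ENNReal.ofReal (r ^ p * ((-Real.log r) ^ (α - 1) * r⁻¹)) := by
    rw [← setLIntegral_const]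
    refine setLIntegral_mono' measurableSet_Ioo (fun r hr => ?_)
    refine ENNReal.ofReal_le_ofReal ?_
    have hr0 : (0:ℝ) < r := lt_trans (by norm_num) hr.1
    have hrq : r ^ p ≥ (4:ℝ)⁻¹ ^ p := Real.rpow_le_rpow (by norm_num) hr.1.le hp.le
    have hrinv : (1:ℝ) ≤ r⁻¹ := by
      have h := mul_inv_cancel₀ hr0.ne'
      nlinarith [inv_pos.2 hr0, hr.2]
    have hlog_lb : Real.log 2 ≤ -Real.log r := by
      have h1 : Real.log r ≤ Real.log 2⁻¹ := Real.log_le_log hr0 hr.2.le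
      rw [Real.log_inv] at h1; linarith
    have hlog_ub : -Real.log r ≤ Real.log 4 := by
      have h1 : Real.log (4⁻¹:ℝ) ≤ Real.log r := Real.log_le_log (by norm_num) hr.1.le
      rw [Real.log_inv] at h1; linarith
    have hmle : m ≤ (-Real.log r) ^ (α - 1) := by
      rcases le_or_gt (α - 1) 0 with hle | hgt
      · refine le_trans (min_le_right _ _) ?_
        exact Real.rpow_le_rpow_of_nonpos (by linarith) hlog_ub hle
      · refine le_trans (min_le_left _ _) ?_
        exact Real.rpow_le_rpow l2.le hlog_lb hgt.le
    calc ε = (4:ℝ)⁻¹ ^ p * (m * 1) := by rw [hε]; ring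
      _ ≤ r ^ p * ((-Real.log r) ^ (α - 1) * r⁻¹) := by
          refine mul_le_mul hrq ?_ (by positivity) (Real.rpow_nonneg hr0.le _)
          exact mul_le_mul hmle hrinv zero_le_one (Real.rpow_nonneg (by linarith) _)
  have hvol : volume (Ioo (4⁻¹:ℝ) (2⁻¹)) = ENNReal.ofReal (4⁻¹:ℝ) := by
    rw [Real.volume_Ioo]; norm_num
  calc (0:ℝ≥0∞) < ENNReal.ofReal ε * ENNReal.ofReal (4⁻¹:ℝ) := by
        exact ENNReal.mul_pos (ENNReal.ofReal_pos.2 hεpos).ne' (ENNReal.ofReal_pos.2 (by norm_num)).ne'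
    _ = ENNReal.ofReal ε * volume (Ioo (4⁻¹:ℝ) (2⁻¹)) := by rw [hvol]
    _ ≤ ∫⁻ r in Ioo (4⁻¹:ℝ) (2⁻¹), ENNReal.ofReal (r ^ p * ((-Real.log r) ^ (α - 1) * r⁻¹)) := key
    _ ≤ ∫⁻ r in Ioo (0:ℝ) 1, ENNReal.ofReal (r ^ p * ((-Real.log r) ^ (α - 1) * r⁻¹)) :=
        lintegral_mono_set hsub

private lemma stmt5_tail_bound {α p : ℝ} (hα : 0 < α) (hp : 0 < p) :
    ∃ c₄ c₅ : ℝ, 0 ≤ c₄ ∧ 0 ≤ c₅ ∧ ∀ a : ℝ, 2 < a →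
      (∫⁻ r in Ioo (0:ℝ) a⁻¹, ENNReal.ofReal ((r * a) ^ p * ((-Real.log r) ^ (α - 1) * r⁻¹)))
        ≤ ENNReal.ofReal (c₄ + c₅ * (Real.log a) ^ α) := by
  have l2 : (0:ℝ) < Real.log 2 := Real.log_pos one_lt_two
  rcases le_or_gt α 1 with hle | hgt
  · -- case α ≤ 1
    refine ⟨(Real.log 2) ^ (α - 1) / p, 0,
      div_nonneg (Real.rpow_nonneg l2.le _) hp.le, le_refl 0, fun a ha => ?_⟩
    have ha0 : (0:ℝ) < a := by linarith
    have hainv : (0:ℝ) < a⁻¹ := inv_pos.2 ha0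
    obtain ⟨K, hK⟩ : ∃ k : ℝ, k = (Real.log 2) ^ (α - 1) * a ^ p := ⟨_, rfl⟩
    have hKnn : 0 ≤ K := by
      rw [hK]; exact mul_nonneg (Real.rpow_nonneg l2.le _) (Real.rpow_nonneg ha0.le _)
    calc (∫⁻ r in Ioo (0:ℝ) a⁻¹,
            ENNReal.ofReal ((r * a) ^ p * ((-Real.log r) ^ (α - 1) * r⁻¹)))
        ≤ ∫⁻ r in Ioo (0:ℝ) a⁻¹, ENNReal.ofReal (K * r ^ (p-1)) := by
          refine setLIntegral_mono' measurableSet_Ioo (fun r hr => ?_)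
          refine ENNReal.ofReal_le_ofReal ?_
          have hr0 : (0:ℝ) < r := hr.1
          have hT : (-Real.log r) ^ (α - 1) ≤ (Real.log 2) ^ (α - 1) := by
            have h1 : Real.log r ≤ Real.log (2⁻¹:ℝ) := by
              refine Real.log_le_log hr0 (le_trans hr.2.le ?_)
              rw [inv_le_inv₀ ha0 (by norm_num)]; linarith
            rw [Real.log_inv] at h1
            exact Real.rpow_le_rpow_of_nonpos l2 (by linarith) (by linarith : α - 1 ≤ 0)
          have e1 : r ^ (p-1) = r ^ p * r⁻¹ := by
            rw [show p - 1 = p + (-1) by ring, Real.rpow_add hr0, Real.rpow_neg_one]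
          have f1 : (r * a) ^ p = r ^ p * a ^ p := Real.mul_rpow hr0.le ha0.le
          calc (r * a) ^ p * ((-Real.log r) ^ (α - 1) * r⁻¹)
              = (-Real.log r) ^ (α - 1) * (a ^ p * (r ^ p * r⁻¹)) := by rw [f1]; ring
            _ ≤ (Real.log 2) ^ (α - 1) * (a ^ p * (r ^ p * r⁻¹)) := by
                refine mul_le_mul_of_nonneg_right hT ?_
                positivity
            _ = K * r ^ (p-1) := by rw [e1, hK]; ring
      _ = ENNReal.ofReal (K * (a⁻¹ ^ p / p)) := by
          rw [stmt5_lint_K_rpow (by linarith : (-1:ℝ) < p - 1) hainv hKnn]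
          norm_num
      _ ≤ ENNReal.ofReal ((Real.log 2) ^ (α - 1) / p + 0 * (Real.log a) ^ α) := by
          refine ENNReal.ofReal_le_ofReal (le_of_eq ?_)
          have hcancel : a ^ p * a⁻¹ ^ p = 1 := by
            rw [← Real.mul_rpow ha0.le (inv_nonneg.2 ha0.le), mul_inv_cancel₀ ha0.ne',
              Real.one_rpow]
          have hstep : K * (a⁻¹ ^ p / p) = (Real.log 2) ^ (α - 1) / p * (a ^ p * a⁻¹ ^ p) := by
            rw [hK]; ring
          rw [hstep, hcancel, mul_one, zero_mul, add_zero]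
  · -- case 1 < α
    obtain ⟨c, hc0, hc⟩ := stmt5_aux_exp_bound (by linarith : (0:ℝ) ≤ α - 1) (half_pos hp)
    have h2nn : (0:ℝ) ≤ 2 ^ (α - 1) := Real.rpow_nonneg (by norm_num) _
    refine ⟨2 ^ (α-1) * (2 + 2*c) / p, 2 ^ (α-1) / p,
      by positivity, by positivity, fun a ha => ?_⟩
    have ha0 : (0:ℝ) < a := by linarith
    have hainv : (0:ℝ) < a⁻¹ := inv_pos.2 ha0
    obtain ⟨L, hLdef⟩ : ∃ l : ℝ, l = Real.log a := ⟨_, rfl⟩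
    have hL : Real.log 2 < L := by rw [hLdef]; exact Real.log_lt_log (by norm_num) ha
    have hL0 : 0 < L := lt_trans l2 hL
    have hLnn : 0 ≤ L ^ (α - 1) := Real.rpow_nonneg hL0.le _
    obtain ⟨K₁, hK₁⟩ : ∃ k : ℝ, k = 2 ^ (α-1) * (L ^ (α-1) + 1) * a ^ p := ⟨_, rfl⟩
    obtain ⟨K₂, hK₂⟩ : ∃ k : ℝ, k = 2 ^ (α-1) * c * a ^ (p/2) := ⟨_, rfl⟩
    have hK₁nn : 0 ≤ K₁ := by
      rw [hK₁]
      have : (0:ℝ) ≤ L ^ (α-1) + 1 := by nlinarith [hLnn]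
      positivity
    have hK₂nn : 0 ≤ K₂ := by rw [hK₂]; positivity
    calc (∫⁻ r in Ioo (0:ℝ) a⁻¹,
            ENNReal.ofReal ((r * a) ^ p * ((-Real.log r) ^ (α - 1) * r⁻¹)))
        ≤ ∫⁻ r in Ioo (0:ℝ) a⁻¹,
            (ENNReal.ofReal (K₁ * r ^ (p-1)) + ENNReal.ofReal (K₂ * r ^ (p/2-1))) := by
          refine setLIntegral_mono' measurableSet_Ioo (fun r hr => ?_)
          have hr0 : (0:ℝ) < r := hr.1
          have hra0 : (0:ℝ) < r * a := mul_pos hr0 ha0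
          have hra1 : r * a ≤ 1 := by
            have := hr.2
            calc r * a ≤ a⁻¹ * a := mul_le_mul_of_nonneg_right hr.2.le ha0.le
              _ = 1 := inv_mul_cancel₀ ha0.ne'
          obtain ⟨t, htdef⟩ : ∃ u : ℝ, u = -Real.log (r * a) := ⟨_, rfl⟩
          have ht0 : 0 ≤ t := by
            have := Real.log_nonpos hra0.le hra1
            rw [htdef]; linarith
          have hsplit : -Real.log r = L + t := by
            rw [htdef, hLdef, Real.log_mul hr0.ne' ha0.ne']; ring
          have hmax : (L + t) ^ (α - 1) ≤ 2 ^ (α-1) * (L ^ (α-1) + t ^ (α-1)) := by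
            have hmle : L + t ≤ 2 * max L t := by
              rcases le_total L t with h | h
              · rw [max_eq_right h]; linarith
              · rw [max_eq_left h]; linarith
            calc (L + t) ^ (α - 1) ≤ (2 * max L t) ^ (α - 1) :=
                  Real.rpow_le_rpow (by linarith) hmle (by linarith)
              _ = 2 ^ (α-1) * (max L t) ^ (α-1) :=
                  Real.mul_rpow (by norm_num) (le_max_of_le_left hL0.le)
              _ ≤ 2 ^ (α-1) * (L ^ (α-1) + t ^ (α-1)) := by
                  refine mul_le_mul_of_nonneg_left ?_ h2nn
                  rcases max_cases L t with ⟨he, _⟩ | ⟨he, _⟩ <;> rw [he]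
                  · nlinarith [Real.rpow_nonneg ht0 (α-1)]
                  · nlinarith [hLnn]
          have htb : t ^ (α-1) ≤ 1 + c * (r*a) ^ (-(p/2)) := by
            have h1 := hc t ht0
            have h2 : Real.exp (p/2 * t) = (r*a) ^ (-(p/2)) := by
              rw [Real.rpow_def_of_pos hra0, htdef]; ring_nf
            rw [h2] at h1; exact h1
          have hTfull : (-Real.log r) ^ (α - 1) ≤
              2 ^ (α-1) * (L ^ (α-1) + 1) + 2 ^ (α-1) * c * (r*a) ^ (-(p/2)) := by
            rw [hsplit]
            nlinarith [mul_le_mul_of_nonneg_left htb h2nn, hmax]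
          have f1 : (r * a) ^ p = r ^ p * a ^ p := Real.mul_rpow hr0.le ha0.le
          have f2 : (r*a) ^ (-(p/2)) * (r * a) ^ p = r ^ (p/2) * a ^ (p/2) := by
            rw [← Real.rpow_add hra0, show -(p/2) + p = p/2 by ring,
              Real.mul_rpow hr0.le ha0.le]
          have e1 : r ^ (p-1) = r ^ p * r⁻¹ := by
            rw [show p - 1 = p + (-1) by ring, Real.rpow_add hr0, Real.rpow_neg_one]
          have e2 : r ^ (p/2-1) = r ^ (p/2) * r⁻¹ := by
            rw [show p/2 - 1 = p/2 + (-1) by ring, Real.rpow_add hr0, Real.rpow_neg_one]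
          have hnn2 : (0:ℝ) ≤ (r*a) ^ p * r⁻¹ := by positivity
          calc ENNReal.ofReal ((r * a) ^ p * ((-Real.log r) ^ (α - 1) * r⁻¹))
              = ENNReal.ofReal ((-Real.log r) ^ (α - 1) * ((r*a) ^ p * r⁻¹)) := by ring_nf
            _ ≤ ENNReal.ofReal ((2 ^ (α-1) * (L ^ (α-1) + 1) + 2 ^ (α-1) * c * (r*a) ^ (-(p/2)))
                  * ((r*a) ^ p * r⁻¹)) :=
                ENNReal.ofReal_le_ofReal (mul_le_mul_of_nonneg_right hTfull hnn2)
            _ = ENNReal.ofReal (K₁ * r ^ (p-1) + K₂ * r ^ (p/2-1)) := by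
                congr 1
                rw [e1, e2, hK₁, hK₂]
                calc (2 ^ (α-1) * (L ^ (α-1) + 1) + 2 ^ (α-1) * c * (r*a) ^ (-(p/2)))
                      * ((r*a) ^ p * r⁻¹)
                    = 2 ^ (α-1) * (L ^ (α-1) + 1) * ((r*a) ^ p) * r⁻¹
                      + 2 ^ (α-1) * c * ((r*a) ^ (-(p/2)) * (r*a) ^ p) * r⁻¹ := by ring
                  _ = _ := by rw [f2, f1]; ring
            _ ≤ ENNReal.ofReal (K₁ * r ^ (p-1)) + ENNReal.ofReal (K₂ * r ^ (p/2-1)) :=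
                ENNReal.ofReal_add_le
      _ = ENNReal.ofReal (K₁ * (a⁻¹ ^ p / p)) + ENNReal.ofReal (K₂ * (a⁻¹ ^ (p/2) / (p/2))) := by
          rw [lintegral_add_left (by fun_prop),
            stmt5_lint_K_rpow (by linarith : (-1:ℝ) < p - 1) hainv hK₁nn,
            stmt5_lint_K_rpow (by linarith : (-1:ℝ) < p/2 - 1) hainv hK₂nn]
          norm_num
      _ ≤ ENNReal.ofReal (2 ^ (α-1) * (2 + 2*c) / p + 2 ^ (α-1) / p * (Real.log a) ^ α) := by
          rw [← ENNReal.ofReal_add (mul_nonneg hK₁nn (by positivity))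
            (mul_nonneg hK₂nn (by positivity))]
          refine ENNReal.ofReal_le_ofReal ?_
          have hcancel : a ^ p * a⁻¹ ^ p = 1 := by
            rw [← Real.mul_rpow ha0.le (inv_nonneg.2 ha0.le), mul_inv_cancel₀ ha0.ne',
              Real.one_rpow]
          have hcancel2 : a ^ (p/2) * a⁻¹ ^ (p/2) = 1 := by
            rw [← Real.mul_rpow ha0.le (inv_nonneg.2 ha0.le), mul_inv_cancel₀ ha0.ne',
              Real.one_rpow]
          have hv1 : K₁ * (a⁻¹ ^ p / p) = 2 ^ (α-1) * (L ^ (α-1) + 1) / p := by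
            have hstep : K₁ * (a⁻¹ ^ p / p)
                = 2 ^ (α-1) * (L ^ (α-1) + 1) / p * (a ^ p * a⁻¹ ^ p) := by rw [hK₁]; ring
            rw [hstep, hcancel, mul_one]
          have hv2 : K₂ * (a⁻¹ ^ (p/2) / (p/2)) = 2 ^ (α-1) * c * 2 / p := by
            have hstep : K₂ * (a⁻¹ ^ (p/2) / (p/2))
                = 2 ^ (α-1) * c * 2 / p * (a ^ (p/2) * a⁻¹ ^ (p/2)) := by rw [hK₂]; ring
            rw [hstep, hcancel2, mul_one]
          rw [hv1, hv2]
          have hLa : L ^ (α-1) ≤ 1 + L ^ α := by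
            rcases le_or_gt L 1 with h | h
            · have := Real.rpow_le_one hL0.le h (by linarith : 0 ≤ α - 1)
              nlinarith [Real.rpow_nonneg hL0.le α]
            · have := Real.rpow_le_rpow_of_exponent_le h.le (by linarith : α - 1 ≤ α)
              linarith
          rw [show Real.log a = L from hLdef.symm]
          have hmul := mul_le_mul_of_nonneg_left hLa (div_nonneg h2nn hp.le)
          have hexp : 2 ^ (α-1) * (L ^ (α-1) + 1) / p
              = 2 ^ (α-1) / p * L ^ (α-1) + 2 ^ (α-1) / p := by ring
          rw [hexp]
          have hmul' : 2 ^ (α-1) / p * (1 + L ^ α)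
              = 2 ^ (α-1) / p + 2 ^ (α-1) / p * L ^ α := by ring
          have expand : 2 ^ (α-1) * (2 + 2*c) / p
              = 2 ^ (α-1) / p + 2 ^ (α-1) / p + 2 ^ (α-1) * c * 2 / p := by ring
          linarith [hmul, hmul', expand]

end stmt5aux

open Set intervalIntegral in
/-- For `ν` with `ν {0} = 0` and
`∫_{‖x‖≤2} ‖x‖² ν(dx) + ∫_{‖x‖>2} (log ‖x‖)^α ν(dx) < ∞`, and
`M_α(B) = ∫ ∫_0^1 1_B(r y) (-log r)^(α-1) r⁻¹ dr ν(dy)`: for any `p > 0`,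
`∫_{‖x‖≤1} ‖x‖^p M_α(dx) < ∞ ↔ ∫_{‖x‖≤1} ‖x‖^p ν(dx) < ∞`. -/
theorem stmt5 {d : ℕ} (α p : ℝ) (hα : 0 < α) (hp : 0 < p)
    (ν : Measure (EuclideanSpace ℝ (Fin d))) (hν0 : ν {0} = 0)
    (hν : (∫⁻ x in {x | ‖x‖ ≤ 2}, ENNReal.ofReal (‖x‖ ^ 2) ∂ν) +
        (∫⁻ x in {x | 2 < ‖x‖}, ENNReal.ofReal ((Real.log ‖x‖) ^ α) ∂ν) < ∞) :
    (∫⁻ y, (∫⁻ r in Set.Ioo (0 : ℝ) 1,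
        ({x : EuclideanSpace ℝ (Fin d) | ‖x‖ ≤ 1}).indicator
          (fun x => ENNReal.ofReal (‖x‖ ^ p * ((-Real.log r) ^ (α - 1) * r⁻¹))) (r • y)) ∂ν) < ∞
      ↔ (∫⁻ x in {x : EuclideanSpace ℝ (Fin d) | ‖x‖ ≤ 1}, ENNReal.ofReal (‖x‖ ^ p) ∂ν) < ∞ := by
  classical
  set E := EuclideanSpace ℝ (Fin d)
  obtain ⟨h2fin, hlogfin⟩ := ENNReal.add_lt_top.1 hν
  obtain ⟨C, hC⟩ : ∃ c : ℝ≥0∞,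
      c = ∫⁻ r in Ioo (0:ℝ) 1, ENNReal.ofReal (r ^ p * ((-Real.log r) ^ (α - 1) * r⁻¹)) :=
    ⟨_, rfl⟩
  have hCfin : C < ∞ := by rw [hC]; exact stmt5_C_lt_top hα hp
  have hCpos : 0 < C := by rw [hC]; exact stmt5_C_pos hα hp
  obtain ⟨c₄, c₅, hc₄, hc₅, htail⟩ := stmt5_tail_bound (α := α) (p := p) hα hp
  have hSmeas : MeasurableSet {x : E | ‖x‖ ≤ 1} :=
    (isClosed_le continuous_norm continuous_const).measurableSet
  have hT12meas : MeasurableSet ({x : E | ‖x‖ ≤ 2} ∩ {x : E | 1 < ‖x‖}) :=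
    ((isClosed_le continuous_norm continuous_const).measurableSet).inter
      ((isOpen_lt continuous_const continuous_norm).measurableSet)
  have hT2meas : MeasurableSet {x : E | 2 < ‖x‖} :=
    (isOpen_lt continuous_const continuous_norm).measurableSet
  -- finiteness of ν on the two outer regions
  have hν12 : ν ({x : E | ‖x‖ ≤ 2} ∩ {x : E | 1 < ‖x‖}) < ∞ := by
    have h1 : ν ({x : E | ‖x‖ ≤ 2} ∩ {x : E | 1 < ‖x‖})
        = ∫⁻ _ in ({x : E | ‖x‖ ≤ 2} ∩ {x : E | 1 < ‖x‖}), 1 ∂ν := by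
      rw [setLIntegral_one]
    rw [h1]
    calc ∫⁻ _ in ({x : E | ‖x‖ ≤ 2} ∩ {x : E | 1 < ‖x‖}), 1 ∂ν
        ≤ ∫⁻ x in ({x : E | ‖x‖ ≤ 2} ∩ {x : E | 1 < ‖x‖}), ENNReal.ofReal (‖x‖ ^ 2) ∂ν := by
          refine setLIntegral_mono' hT12meas (fun x hx => ?_)
          rw [← ENNReal.ofReal_one]
          refine ENNReal.ofReal_le_ofReal ?_
          have h1x : (1:ℝ) < ‖x‖ := hx.2
          nlinarith [h1x]
      _ ≤ ∫⁻ x in {x : E | ‖x‖ ≤ 2}, ENNReal.ofReal (‖x‖ ^ 2) ∂ν :=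
          lintegral_mono_set inter_subset_left
      _ < ∞ := h2fin
  have hν2 : ν {x : E | 2 < ‖x‖} < ∞ := by
    have hm : ENNReal.ofReal ((Real.log 2) ^ α) * ν {x : E | 2 < ‖x‖}
        ≤ ∫⁻ x in {x : E | 2 < ‖x‖}, ENNReal.ofReal ((Real.log ‖x‖) ^ α) ∂ν := by
      rw [← setLIntegral_const]
      refine setLIntegral_mono' hT2meas (fun x hx => ?_)
      refine ENNReal.ofReal_le_ofReal ?_
      exact Real.rpow_le_rpow (Real.log_pos one_lt_two).le
        (Real.log_le_log (by norm_num) (le_of_lt hx)) hα.le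
    have hKne : ENNReal.ofReal ((Real.log 2) ^ α) ≠ 0 :=
      (ENNReal.ofReal_pos.2 (Real.rpow_pos_of_pos (Real.log_pos one_lt_two) α)).ne'
    by_contra hcon
    rw [not_lt, top_le_iff] at hcon
    rw [hcon, ENNReal.mul_top hKne] at hm
    exact absurd (lt_of_le_of_lt hm hlogfin) (lt_irrefl ∞)
  -- the main reduction
  suffices H : ∀ Φ : E → ℝ≥0∞,
      (∀ y, ‖y‖ ≤ 1 → Φ y = ENNReal.ofReal (‖y‖ ^ p) * C) →
      (∀ y, ‖y‖ ≤ 2 → Φ y ≤ ENNReal.ofReal (2 ^ p) * C) →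
      (∀ y, 2 < ‖y‖ → Φ y ≤ ENNReal.ofReal (c₄ + c₅ * (Real.log ‖y‖) ^ α)) →
      ((∫⁻ y, Φ y ∂ν) < ∞
        ↔ (∫⁻ x in {x : E | ‖x‖ ≤ 1}, ENNReal.ofReal (‖x‖ ^ p) ∂ν) < ∞) by
    refine H _ ?_ ?_ ?_
    · -- small
      intro y hy
      rw [hC, ← lintegral_const_mul' _ _ ENNReal.ofReal_ne_top]
      refine setLIntegral_congr_fun measurableSet_Ioo (fun r hr => ?_)
      have hr0 : (0:ℝ) < r := hr.1
      have hmem : r • y ∈ {x : E | ‖x‖ ≤ 1} := by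
        simp only [mem_setOf_eq, norm_smul, Real.norm_eq_abs, abs_of_pos hr0]
        nlinarith [hr.2, hy, norm_nonneg y, hr0]
      rw [Set.indicator_of_mem hmem]
      rw [norm_smul, Real.norm_eq_abs, abs_of_pos hr0,
        Real.mul_rpow hr0.le (norm_nonneg y),
        ← ENNReal.ofReal_mul (Real.rpow_nonneg (norm_nonneg y) p)]
      congr 1
      ring
    · -- mid
      intro y hy
      rw [hC, ← lintegral_const_mul' _ _ ENNReal.ofReal_ne_top]
      refine setLIntegral_mono' measurableSet_Ioo (fun r hr => ?_)
      refine le_trans (Set.indicator_le_self _ _ _) ?_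
      rw [← ENNReal.ofReal_mul (Real.rpow_nonneg (by norm_num : (0:ℝ) ≤ 2) p)]
      refine ENNReal.ofReal_le_ofReal ?_
      have hr0 : (0:ℝ) < r := hr.1
      have hlognn : 0 ≤ -Real.log r := by
        have := Real.log_nonpos hr0.le hr.2.le; linarith
      have hXnn : 0 ≤ (-Real.log r) ^ (α - 1) * r⁻¹ :=
        mul_nonneg (Real.rpow_nonneg hlognn _) (inv_nonneg.2 hr0.le)
      have hnorm : ‖r • y‖ ^ p ≤ 2 ^ p * r ^ p := by
        rw [norm_smul, Real.norm_eq_abs, abs_of_pos hr0,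
          Real.mul_rpow hr0.le (norm_nonneg y)]
        have h2 : ‖y‖ ^ p ≤ 2 ^ p := Real.rpow_le_rpow (norm_nonneg y) hy hp.le
        nlinarith [Real.rpow_nonneg hr0.le p, Real.rpow_nonneg (norm_nonneg y) p]
      calc ‖r • y‖ ^ p * ((-Real.log r) ^ (α - 1) * r⁻¹)
          ≤ (2 ^ p * r ^ p) * ((-Real.log r) ^ (α - 1) * r⁻¹) :=
            mul_le_mul_of_nonneg_right hnorm hXnn
        _ = 2 ^ p * (r ^ p * ((-Real.log r) ^ (α - 1) * r⁻¹)) := by ring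
    · -- large
      intro y hy
      have ha0 : (0:ℝ) < ‖y‖ := by linarith
      have hainv : (0:ℝ) < ‖y‖⁻¹ := inv_pos.2 ha0
      have hainv1 : ‖y‖⁻¹ < 1 := by
        rw [inv_lt_one_iff₀]; right; linarith
      have step1 : (∫⁻ r in Set.Ioo (0 : ℝ) 1,
          ({x : E | ‖x‖ ≤ 1}).indicator
            (fun x => ENNReal.ofReal (‖x‖ ^ p * ((-Real.log r) ^ (α - 1) * r⁻¹))) (r • y))
          = ∫⁻ r in Set.Ioo (0 : ℝ) 1,
            (Iic ‖y‖⁻¹).indicator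
              (fun r => ENNReal.ofReal ((r * ‖y‖) ^ p * ((-Real.log r) ^ (α - 1) * r⁻¹))) r := by
        refine setLIntegral_congr_fun measurableSet_Ioo (fun r hr => ?_)
        have hr0 : (0:ℝ) < r := hr.1
        by_cases hcase : r * ‖y‖ ≤ 1
        · have hmem1 : r • y ∈ {x : E | ‖x‖ ≤ 1} := by
            simp only [mem_setOf_eq, norm_smul, Real.norm_eq_abs, abs_of_pos hr0]
            exact hcase
          have hmem2 : r ∈ Iic ‖y‖⁻¹ := by
            rw [mem_Iic]
            nlinarith [mul_inv_cancel₀ ha0.ne', hainv]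
          rw [Set.indicator_of_mem hmem1, Set.indicator_of_mem hmem2,
            norm_smul, Real.norm_eq_abs, abs_of_pos hr0]
        · have hmem1 : r • y ∉ {x : E | ‖x‖ ≤ 1} := by
            simp only [mem_setOf_eq, norm_smul, Real.norm_eq_abs, abs_of_pos hr0]
            exact hcase
          have hmem2 : r ∉ Iic ‖y‖⁻¹ := by
            rw [mem_Iic]
            intro hle
            exact hcase (by nlinarith [mul_inv_cancel₀ ha0.ne'])
          rw [Set.indicator_of_notMem hmem1, Set.indicator_of_notMem hmem2]
      rw [step1]
      have step2 : (∫⁻ r in Set.Ioo (0 : ℝ) 1,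
            (Iic ‖y‖⁻¹).indicator
              (fun r => ENNReal.ofReal ((r * ‖y‖) ^ p * ((-Real.log r) ^ (α - 1) * r⁻¹))) r)
          = ∫⁻ r in Ioo (0:ℝ) ‖y‖⁻¹,
              ENNReal.ofReal ((r * ‖y‖) ^ p * ((-Real.log r) ^ (α - 1) * r⁻¹)) := by
        rw [lintegral_indicator measurableSet_Iic,
          Measure.restrict_restrict measurableSet_Iic]
        have hset : Iic ‖y‖⁻¹ ∩ Ioo (0:ℝ) 1 = Ioc (0:ℝ) ‖y‖⁻¹ := by
          ext r
          simp only [mem_inter_iff, mem_Iic, mem_Ioo, mem_Ioc]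
          constructor
          · rintro ⟨h1, h2, _⟩; exact ⟨h2, h1⟩
          · rintro ⟨h1, h2⟩; exact ⟨h2, h1, lt_of_le_of_lt h2 hainv1⟩
        rw [hset, Measure.restrict_congr_set Ioo_ae_eq_Ioc.symm]
      rw [step2]
      exact htail ‖y‖ hy
  -- proof of H
  intro Φ hsmall hmid hlarge
  have hdecomp : ∫⁻ y, Φ y ∂ν
      = (∫⁻ y in {x : E | ‖x‖ ≤ 1}, Φ y ∂ν)
        + ∫⁻ y in {x : E | ‖x‖ ≤ 1}ᶜ, Φ y ∂ν := (lintegral_add_compl _ hSmeas).symm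
  have hSpart : (∫⁻ y in {x : E | ‖x‖ ≤ 1}, Φ y ∂ν)
      = (∫⁻ x in {x : E | ‖x‖ ≤ 1}, ENNReal.ofReal (‖x‖ ^ p) ∂ν) * C := by
    calc (∫⁻ y in {x : E | ‖x‖ ≤ 1}, Φ y ∂ν)
        = ∫⁻ y in {x : E | ‖x‖ ≤ 1}, ENNReal.ofReal (‖y‖ ^ p) * C ∂ν :=
          setLIntegral_congr_fun hSmeas (fun y hy => hsmall y hy)
      _ = (∫⁻ x in {x : E | ‖x‖ ≤ 1}, ENNReal.ofReal (‖x‖ ^ p) ∂ν) * C :=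
          lintegral_mul_const' _ _ hCfin.ne
  have hcompl : (∫⁻ y in {x : E | ‖x‖ ≤ 1}ᶜ, Φ y ∂ν) < ∞ := by
    have hsub : {x : E | ‖x‖ ≤ 1}ᶜ
        ⊆ ({x : E | ‖x‖ ≤ 2} ∩ {x : E | 1 < ‖x‖}) ∪ {x : E | 2 < ‖x‖} := by
      intro x hx
      simp only [mem_compl_iff, mem_setOf_eq, not_le] at hx
      by_cases h : ‖x‖ ≤ 2
      · exact Or.inl ⟨h, hx⟩
      · exact Or.inr (not_le.1 h)
    calc (∫⁻ y in {x : E | ‖x‖ ≤ 1}ᶜ, Φ y ∂ν)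
        ≤ ∫⁻ y in (({x : E | ‖x‖ ≤ 2} ∩ {x : E | 1 < ‖x‖}) ∪ {x : E | 2 < ‖x‖}), Φ y ∂ν :=
          lintegral_mono_set hsub
      _ ≤ (∫⁻ y in ({x : E | ‖x‖ ≤ 2} ∩ {x : E | 1 < ‖x‖}), Φ y ∂ν)
          + ∫⁻ y in {x : E | 2 < ‖x‖}, Φ y ∂ν := lintegral_union_le _ _ _
      _ < ∞ := by
          refine ENNReal.add_lt_top.2 ⟨?_, ?_⟩
          · calc (∫⁻ y in ({x : E | ‖x‖ ≤ 2} ∩ {x : E | 1 < ‖x‖}), Φ y ∂ν)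
                ≤ ∫⁻ _ in ({x : E | ‖x‖ ≤ 2} ∩ {x : E | 1 < ‖x‖}),
                    ENNReal.ofReal (2 ^ p) * C ∂ν :=
                  setLIntegral_mono' hT12meas (fun y hy => hmid y hy.1)
              _ = ENNReal.ofReal (2 ^ p) * C * ν ({x : E | ‖x‖ ≤ 2} ∩ {x : E | 1 < ‖x‖}) :=
                  setLIntegral_const _ _
              _ < ∞ := ENNReal.mul_lt_top
                  (ENNReal.mul_lt_top ENNReal.ofReal_lt_top hCfin) hν12
          · calc (∫⁻ y in {x : E | 2 < ‖x‖}, Φ y ∂ν)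
                ≤ ∫⁻ y in {x : E | 2 < ‖x‖},
                    (ENNReal.ofReal c₄
                      + ENNReal.ofReal c₅ * ENNReal.ofReal ((Real.log ‖y‖) ^ α)) ∂ν := by
                  refine setLIntegral_mono' hT2meas (fun y hy => ?_)
                  refine le_trans (hlarge y hy) ?_
                  have h2y : (2:ℝ) < ‖y‖ := hy
                  have hlognn : (0:ℝ) ≤ Real.log ‖y‖ := Real.log_nonneg (by linarith)
                  rw [ENNReal.ofReal_add hc₄
                    (mul_nonneg hc₅ (Real.rpow_nonneg hlognn _)), ENNReal.ofReal_mul hc₅]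
              _ = ENNReal.ofReal c₄ * ν {x : E | 2 < ‖x‖}
                  + ENNReal.ofReal c₅
                    * ∫⁻ y in {x : E | 2 < ‖x‖}, ENNReal.ofReal ((Real.log ‖y‖) ^ α) ∂ν := by
                  rw [lintegral_add_left measurable_const,
                    lintegral_const_mul' _ _ ENNReal.ofReal_ne_top, setLIntegral_const]
              _ < ∞ := ENNReal.add_lt_top.2
                  ⟨ENNReal.mul_lt_top ENNReal.ofReal_lt_top hν2,
                   ENNReal.mul_lt_top ENNReal.ofReal_lt_top hlogfin⟩
  rw [hdecomp, hSpart]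
  constructor
  · intro h
    have h1 := (ENNReal.add_lt_top.1 h).1
    by_contra hI
    rw [not_lt, top_le_iff] at hI
    rw [hI, ENNReal.top_mul hCpos.ne'] at h1
    exact absurd h1 (lt_irrefl ∞)
  · intro h
    exact ENNReal.add_lt_top.2 ⟨ENNReal.mul_lt_top h hCfin, hcompl⟩
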